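/- Fix an integer $i \ge 0$. Then every $x \in E^\times$ belongs to the double coset $\mathbb{Q}_p^\times\, y\, \mathcal{O}_{E,i}^\times$ for exactly one element $y$ of the following list: $y = 1 + b\theta$ with $b$ ranging over a complete set of representatives of $\mathbb{Z}_p/p^i\mathbb{Z}_p$, or $y = ap + \theta$ with $a$ ranging over a complete set of representatives of $\mathbb{Z}_p/p^i\mathbb{Z}_p$ (the double coset of $y$ depending only on the residue class of $b$, respectively $a$). -/

import Mathlib

open scoped Classical

namespace ArakawaQuad

variable (p : ℕ) [Fact p.Prime]
variable (E : Type*) [Field E] [Algebra ℚ_[p] E] [Algebra ℤ_[p] E]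
  [IsScalarTower ℤ_[p] ℚ_[p] E]

/-- Membership in `𝒪_{E,i} = ℤ_p + p^i 𝒪_E`, where `𝒪_E` is the ring of integers
(the integral closure of `ℤ_p` in `E`). -/
def MemOEi (i : ℕ) (z : E) : Prop :=
  ∃ a : ℤ_[p], ∃ w ∈ integralClosure ℤ_[p] E, z = algebraMap ℤ_[p] E a + (p : E) ^ i * w

/-- Membership of a unit `u ∈ Eˣ` in `𝒪_{E,i}^× = 𝒪_{E,i} ∩ 𝒪_E^×`. -/
def MemOEiUnits (i : ℕ) (u : Eˣ) : Prop :=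
  MemOEi p E i ↑u ∧ (↑u : E) ∈ integralClosure ℤ_[p] E ∧
    ((↑u⁻¹ : E) ∈ integralClosure ℤ_[p] E)

/-- `χ : E^× → ℂ^×` is trivial on `ℚ_p^×`. -/
def TrivialOnQp (χ : Eˣ →* ℂˣ) : Prop :=
  ∀ t : ℚ_[p]ˣ, χ (Units.map (algebraMap ℚ_[p] E).toMonoidHom t) = 1

/-- `χ` has conductor exponent `n`: it is trivial on `𝒪_{E,n}^×` and, when `n > 0`,
nontrivial on `𝒪_{E,n-1}^×`. -/
def CondExp (χ : Eˣ →* ℂˣ) (n : ℕ) : Prop :=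
  (∀ u : Eˣ, MemOEiUnits p E n u → χ u = 1) ∧
  (0 < n → ∃ u : Eˣ, MemOEiUnits p E (n - 1) u ∧ χ u ≠ 1)

/-- The value of `χ : E^× → ℂ^×` at an element of `E`, with junk value `0` at `0`. -/
noncomputable def chiV {F : Type*} [Field F] (χ : Fˣ →* ℂˣ) (z : F) : ℂ :=
  if h : z ≠ 0 then (χ (Units.mk0 z h) : ℂ) else 0

/-- `E` is an unramified quadratic extension of `ℚ_p`: it has degree `2` and the
maximal ideal of its ring of integers `𝒪_E` is `p 𝒪_E` (an element of `𝒪_E` is a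
unit of `𝒪_E` if and only if it does not lie in `p 𝒪_E`). -/
def Unramified : Prop :=
  Module.finrank ℚ_[p] E = 2 ∧
  ∀ z ∈ integralClosure ℤ_[p] E,
    ((∃ w ∈ integralClosure ℤ_[p] E, z * w = 1) ↔
      ¬ ∃ w ∈ integralClosure ℤ_[p] E, z = (p : E) * w)

/-- `E` is a ramified quadratic extension of `ℚ_p` with maximal ideal `𝔭 = θ 𝒪_E`
satisfying `𝔭² = p 𝒪_E`: it has degree `2`, `θ ∈ 𝒪_E` generates the maximal ideal
(an element of `𝒪_E` is a unit of `𝒪_E` iff it is not in `θ 𝒪_E`), and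
`θ² = p u` for a unit `u` of `𝒪_E`. -/
def Ramified (θ : E) : Prop :=
  Module.finrank ℚ_[p] E = 2 ∧
  θ ∈ integralClosure ℤ_[p] E ∧
  (∀ z ∈ integralClosure ℤ_[p] E,
    ((∃ w ∈ integralClosure ℤ_[p] E, z * w = 1) ↔
      ¬ ∃ w ∈ integralClosure ℤ_[p] E, z = θ * w)) ∧
  (∃ u ∈ integralClosure ℤ_[p] E,
    (∃ v ∈ integralClosure ℤ_[p] E, u * v = 1) ∧ θ ^ 2 = (p : E) * u)

/-- `{1, θ}` is a `ℤ_p`-basis of the ring of integers `𝒪_E`. -/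
def IsIntBasis (θ : E) : Prop :=
  θ ∈ integralClosure ℤ_[p] E ∧
  ∀ z ∈ integralClosure ℤ_[p] E, ∃! ab : ℤ_[p] × ℤ_[p],
    z = algebraMap ℤ_[p] E ab.1 + algebraMap ℤ_[p] E ab.2 * θ

/-- `x` lies in the double coset `ℚ_p^× y 𝒪_{E,i}^×` inside `E^×`. -/
def InCoset (i : ℕ) (y x : E) : Prop :=
  ∃ t : ℚ_[p]ˣ, ∃ u : Eˣ, MemOEiUnits p E i u ∧
    x = algebraMap ℚ_[p] E ↑t * y * ↑u

/-- The unit group `𝒪_E^×`, as a subgroup of `E^×`. -/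
def OEUnits : Subgroup Eˣ where
  carrier := {u | (↑u : E) ∈ integralClosure ℤ_[p] E ∧
    ((↑u⁻¹ : E) ∈ integralClosure ℤ_[p] E)}
  one_mem' := ⟨by simpa using (integralClosure ℤ_[p] E).one_mem,
    by simpa using (integralClosure ℤ_[p] E).one_mem⟩
  mul_mem' := by
    rintro a b ⟨ha1, ha2⟩ ⟨hb1, hb2⟩
    refine ⟨?_, ?_⟩
    · simpa [Units.val_mul] using mul_mem ha1 hb1
    · simpa [Units.val_mul, mul_inv_rev] using mul_mem hb2 ha2
  inv_mem' := by
    rintro a ⟨h1, h2⟩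
    exact ⟨h2, by simpa using h1⟩

end ArakawaQuad

open ArakawaQuad
set_option linter.unusedSectionVars false

namespace ArakawaQuadAux

variable {p : ℕ} [hp : Fact p.Prime]
variable {E : Type*} [Field E] [Algebra ℚ_[p] E] [Algebra ℤ_[p] E]
  [IsScalarTower ℤ_[p] ℚ_[p] E] {θ : E}

local notation "fZ" => algebraMap ℤ_[p] E
local notation "gQ" => algebraMap ℚ_[p] E
local notation "RE" => integralClosure ℤ_[p] E

lemma fZ_eq (z : ℤ_[p]) : fZ z = gQ (z : ℚ_[p]) := by
  rw [IsScalarTower.algebraMap_apply ℤ_[p] ℚ_[p] E, PadicInt.algebraMap_apply]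

lemma gQ_p : gQ (p : ℚ_[p]) = (p : E) := map_natCast _ _

lemma fZ_p : fZ (p : ℤ_[p]) = (p : E) := map_natCast _ _

lemma p_ne_zero_E : (p : E) ≠ 0 := by
  rw [← gQ_p]
  exact (map_ne_zero gQ).mpr (Nat.cast_ne_zero.mpr hp.out.ne_zero)

lemma p_ne_zero_Q : ((p : ℚ_[p])) ≠ 0 := Nat.cast_ne_zero.mpr hp.out.ne_zero

lemma isUnit_of_not_dvd {a : ℤ_[p]} (h : ¬ (p : ℤ_[p]) ∣ a) : IsUnit a := by
  refine PadicInt.isUnit_iff.mpr (le_antisymm (PadicInt.norm_le_one a) ?_)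
  by_contra hlt
  push_neg at hlt
  exact h ((PadicInt.norm_lt_one_iff_dvd a).mp hlt)

lemma p_not_unit : ¬ IsUnit (p : ℤ_[p]) := by
  intro h
  have h2 : ((p : ℝ))⁻¹ = 1 := by
    rw [← PadicInt.norm_p (p := p)]
    exact PadicInt.isUnit_iff.mp h
  have h3 : (p : ℝ) = 1 := by
    rw [inv_eq_one] at h2; exact h2
  have := hp.out.one_lt
  have : (1 : ℝ) < (p : ℝ) := by exact_mod_cast this
  linarith

lemma not_p_dvd_one : ¬ (p : ℤ_[p]) ∣ (1 : ℤ_[p]) :=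
  fun h => p_not_unit (isUnit_of_dvd_one h)

lemma mem_R (hθR : θ ∈ RE) (α β : ℤ_[p]) : fZ α + fZ β * θ ∈ RE :=
  add_mem (Subalgebra.algebraMap_mem _ α) (mul_mem (Subalgebra.algebraMap_mem _ β) hθR)

lemma p_mem_R : ((p : E)) ∈ RE := by
  rw [← fZ_p]; exact Subalgebra.algebraMap_mem _ _

lemma uniq (hθR : θ ∈ RE)
    (hbasis : ∀ z ∈ RE, ∃! ab : ℤ_[p] × ℤ_[p], z = fZ ab.1 + fZ ab.2 * θ)
    {α β α' β' : ℤ_[p]}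
    (h : fZ α + fZ β * θ = fZ α' + fZ β' * θ) : α = α' ∧ β = β' := by
  have h1 : ((α, β) : ℤ_[p] × ℤ_[p]) = (α', β') :=
    (hbasis _ (mem_R hθR α β)).unique rfl h
  exact ⟨congrArg Prod.fst h1, congrArg Prod.snd h1⟩

lemma prod_eq {u₁ u₂ : ℤ_[p]} (hu : θ ^ 2 = (p : E) * (fZ u₁ + fZ u₂ * θ))
    (A B C W : ℤ_[p]) :
    (fZ A + fZ B * θ) * (fZ C + fZ W * θ)
      = fZ (A * C + p * B * W * u₁) + fZ (A * W + B * C + p * B * W * u₂) * θ := by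
  simp only [map_add, map_mul, map_natCast]
  linear_combination (fZ B * fZ W) * hu

lemma theta_mul {u₁ u₂ : ℤ_[p]} (hu : θ ^ 2 = (p : E) * (fZ u₁ + fZ u₂ * θ))
    (w₁ w₂ : ℤ_[p]) :
    θ * (fZ w₁ + fZ w₂ * θ) = fZ (p * w₂ * u₁) + fZ (w₁ + p * w₂ * u₂) * θ := by
  simp only [map_add, map_mul, map_natCast]
  linear_combination fZ w₂ * hu

lemma theta_dvd (hθR : θ ∈ RE)
    (hbasis : ∀ z ∈ RE, ∃! ab : ℤ_[p] × ℤ_[p], z = fZ ab.1 + fZ ab.2 * θ)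
    {u₁ u₂ : ℤ_[p]} (hu : θ ^ 2 = (p : E) * (fZ u₁ + fZ u₂ * θ))
    {α β : ℤ_[p]}
    (h : ∃ w ∈ RE, fZ α + fZ β * θ = θ * w) : (p : ℤ_[p]) ∣ α := by
  obtain ⟨w, hwR, hw⟩ := h
  obtain ⟨⟨w₁, w₂⟩, hw12, -⟩ := hbasis w hwR
  rw [hw12, theta_mul hu] at hw
  obtain ⟨h1, -⟩ := uniq hθR hbasis hw
  exact ⟨w₂ * u₁, by rw [h1]; ring⟩

lemma dvd_theta (hθR : θ ∈ RE)
    {u₁ u₂ : ℤ_[p]} (hu : θ ^ 2 = (p : E) * (fZ u₁ + fZ u₂ * θ))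
    {uinv : E} (huinvR : uinv ∈ RE)
    (huuinv : (fZ u₁ + fZ u₂ * θ) * uinv = 1) {α β : ℤ_[p]}
    (h : (p : ℤ_[p]) ∣ α) : ∃ w ∈ RE, fZ α + fZ β * θ = θ * w := by
  obtain ⟨α', hα'⟩ := h
  refine ⟨θ * uinv * fZ α' + fZ β, add_mem (mul_mem (mul_mem hθR huinvR)
    (Subalgebra.algebraMap_mem _ _)) (Subalgebra.algebraMap_mem _ _), ?_⟩
  rw [hα']
  simp only [map_mul, map_natCast]
  linear_combination (-(fZ α' * uinv)) * hu - ((p : E) * fZ α') * huuinv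

lemma p_mul_mem_theta (hθR : θ ∈ RE)
    {u₁ u₂ : ℤ_[p]} (hu : θ ^ 2 = (p : E) * (fZ u₁ + fZ u₂ * θ))
    {uinv : E} (huinvR : uinv ∈ RE)
    (huuinv : (fZ u₁ + fZ u₂ * θ) * uinv = 1) {r : E} (hr : r ∈ RE) :
    ∃ w ∈ RE, (p : E) * r = θ * w := by
  refine ⟨θ * uinv * r, mul_mem (mul_mem hθR huinvR) hr, ?_⟩
  linear_combination (-(r * uinv)) * hu - ((p : E) * r) * huuinv

lemma unit_RE (hθR : θ ∈ RE)
    (hbasis : ∀ z ∈ RE, ∃! ab : ℤ_[p] × ℤ_[p], z = fZ ab.1 + fZ ab.2 * θ)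
    (hcrit : ∀ z ∈ RE, ((∃ w ∈ RE, z * w = 1) ↔ ¬∃ w ∈ RE, z = θ * w))
    {u₁ u₂ : ℤ_[p]} (hu : θ ^ 2 = (p : E) * (fZ u₁ + fZ u₂ * θ))
    {α β : ℤ_[p]} (hα : ¬ (p : ℤ_[p]) ∣ α) :
    ∃ w ∈ RE, (fZ α + fZ β * θ) * w = 1 :=
  (hcrit _ (mem_R hθR α β)).mpr (fun h => hα (theta_dvd hθR hbasis hu h))

/-- decomposition of a nonzero `p`-adic number -/
lemma padic_rep {q : ℚ_[p]} (hq : q ≠ 0) :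
    ∃ (c : ℤ_[p]ˣ) (k : ℤ), q = ((c : ℤ_[p]) : ℚ_[p]) * (p : ℚ_[p]) ^ k := by
  rcases le_or_gt ‖q‖ 1 with h | h
  · set z : ℤ_[p] := ⟨q, h⟩ with hzdef
    have hz0 : z ≠ 0 := by
      intro h0
      apply hq
      have : (z : ℚ_[p]) = ((0 : ℤ_[p]) : ℚ_[p]) := by rw [h0]
      rw [PadicInt.coe_zero] at this; exact this
    refine ⟨PadicInt.unitCoeff hz0, (z.valuation : ℤ), ?_⟩
    have hq' : q = (z : ℚ_[p]) := rfl
    rw [hq']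
    conv_lhs => rw [PadicInt.unitCoeff_spec hz0]
    rw [zpow_natCast]
    push_cast
    ring
  · have hqi : q⁻¹ ≠ 0 := inv_ne_zero hq
    have hinv : ‖q⁻¹‖ ≤ 1 := by
      rw [norm_inv]
      exact inv_le_one_of_one_le₀ h.le
    set z : ℤ_[p] := ⟨q⁻¹, hinv⟩ with hzdef
    have hz0 : z ≠ 0 := by
      intro h0
      apply hqi
      have : (z : ℚ_[p]) = ((0 : ℤ_[p]) : ℚ_[p]) := by rw [h0]
      rw [PadicInt.coe_zero] at this; exact this
    set c := PadicInt.unitCoeff hz0 with hcdef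
    set n := z.valuation with hndef
    have hspec : q⁻¹ = ((c : ℤ_[p]) : ℚ_[p]) * (p : ℚ_[p]) ^ (n : ℕ) := by
      have hq' : q⁻¹ = (z : ℚ_[p]) := rfl
      rw [hq']
      conv_lhs => rw [PadicInt.unitCoeff_spec hz0]
      push_cast
      ring
    refine ⟨c⁻¹, -(n : ℤ), ?_⟩
    have hcc : ((↑(c⁻¹) : ℤ_[p]) : ℚ_[p]) * ((↑c : ℤ_[p]) : ℚ_[p]) = 1 := by
      rw [← PadicInt.coe_mul, ← Units.val_mul, inv_mul_cancel, Units.val_one,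
        PadicInt.coe_one]
    have hpn : ((p : ℚ_[p]) ^ (n : ℕ)) ≠ 0 := pow_ne_zero _ p_ne_zero_Q
    have hc0 : ((↑c : ℤ_[p]) : ℚ_[p]) ≠ 0 := by
      intro h0
      rw [h0, zero_mul] at hspec
      exact hqi hspec
    rw [zpow_neg, zpow_natCast]
    have hq2 : q = (((↑c : ℤ_[p]) : ℚ_[p]) * (p : ℚ_[p]) ^ (n : ℕ))⁻¹ := by
      rw [← hspec, inv_inv]
    rw [hq2, mul_inv, eq_inv_of_mul_eq_one_left hcc]

lemma fZ_unit_pow_succ (c : ℤ_[p]) (m : ℕ) :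
    fZ (c * (p : ℤ_[p]) ^ (m + 1)) = (p : E) * fZ (c * (p : ℤ_[p]) ^ m) := by
  rw [← fZ_p, ← map_mul]
  congr 1
  ring

lemma cast_mul_pow (z : ℤ_[p]) (n : ℕ) :
    gQ (((z : ℤ_[p]) : ℚ_[p]) * (p : ℚ_[p]) ^ n) = fZ (z * (p : ℤ_[p]) ^ n) := by
  have h : ((z * (p : ℤ_[p]) ^ n : ℤ_[p]) : ℚ_[p])
      = ((z : ℤ_[p]) : ℚ_[p]) * (p : ℚ_[p]) ^ n := by
    push_cast
    ring
  rw [fZ_eq, h]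

/-- trichotomy for a nonzero `p`-adic number -/
lemma padic_rep' {q : ℚ_[p]} (hq : q ≠ 0) :
    (∃ c : ℤ_[p]ˣ, q = ((c : ℤ_[p]) : ℚ_[p])) ∨
    (∃ (c : ℤ_[p]ˣ) (n : ℕ), 0 < n ∧ q = ((c : ℤ_[p]) : ℚ_[p]) * (p : ℚ_[p]) ^ n) ∨
    (∃ (c : ℤ_[p]ˣ) (n : ℕ), 0 < n ∧ q⁻¹ = ((c : ℤ_[p]) : ℚ_[p]) * (p : ℚ_[p]) ^ n) := by
  obtain ⟨c, k, hck⟩ := padic_rep hq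
  rcases lt_trichotomy k 0 with hk | hk | hk
  · right; right
    refine ⟨c⁻¹, (-k).toNat, by omega, ?_⟩
    have hzp : (p : ℚ_[p]) ^ k * (p : ℚ_[p]) ^ ((-k).toNat : ℕ) = 1 := by
      rw [← zpow_natCast (p : ℚ_[p]) (-k).toNat, ← zpow_add₀ p_ne_zero_Q,
        Int.toNat_of_nonneg (by omega)]
      simp
    have hcc : ((↑c : ℤ_[p]) : ℚ_[p]) * ((↑(c⁻¹) : ℤ_[p]) : ℚ_[p]) = 1 := by
      rw [← PadicInt.coe_mul, ← Units.val_mul, mul_inv_cancel, Units.val_one,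
        PadicInt.coe_one]
    refine inv_eq_of_mul_eq_one_right ?_
    rw [hck]
    linear_combination (((↑c : ℤ_[p]) : ℚ_[p]) * ((↑(c⁻¹) : ℤ_[p]) : ℚ_[p])) * hzp +
      hcc
  · left
    refine ⟨c, ?_⟩
    rw [hck, hk, zpow_zero, mul_one]
  · right; left
    refine ⟨c, k.toNat, by omega, ?_⟩
    rw [hck, ← zpow_natCast (p : ℚ_[p]) k.toNat, Int.toNat_of_nonneg hk.le]

/-- the scalar lemma: an element of `ℚ_p` that is a unit of `𝒪_E` lies in `ℤ_p^×`. -/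
lemma scalar_int (hθR : θ ∈ RE)
    (hcrit : ∀ z ∈ RE, ((∃ w ∈ RE, z * w = 1) ↔ ¬∃ w ∈ RE, z = θ * w))
    {u₁ u₂ : ℤ_[p]} (hu : θ ^ 2 = (p : E) * (fZ u₁ + fZ u₂ * θ))
    {uinv : E} (huinvR : uinv ∈ RE)
    (huuinv : (fZ u₁ + fZ u₂ * θ) * uinv = 1)
    {q : ℚ_[p]} (hq : q ≠ 0) (h1 : gQ q ∈ RE) (h2 : gQ q⁻¹ ∈ RE) :
    ∃ c : ℤ_[p], IsUnit c ∧ gQ q = fZ c := by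
  have hqinv : gQ q * gQ q⁻¹ = 1 := by
    rw [← map_mul, mul_inv_cancel₀ hq, map_one]
  rcases padic_rep' hq with ⟨c, hc⟩ | ⟨c, n, hn, hc⟩ | ⟨c, n, hn, hc⟩
  · exact ⟨↑c, c.isUnit, by rw [hc, ← fZ_eq]⟩
  · exfalso
    obtain ⟨m, rfl⟩ : ∃ m, n = m + 1 := ⟨n - 1, by omega⟩
    have hs : gQ q = (p : E) * fZ (↑c * (p : ℤ_[p]) ^ m) := by
      rw [hc, cast_mul_pow, fZ_unit_pow_succ]
    obtain ⟨w, hwR, hw⟩ := p_mul_mem_theta hθR hu huinvR huuinv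
      (Subalgebra.algebraMap_mem RE (↑c * (p : ℤ_[p]) ^ m))
    exact (hcrit _ h1).mp ⟨gQ q⁻¹, h2, hqinv⟩ ⟨w, hwR, by rw [hs, hw]⟩
  · exfalso
    obtain ⟨m, rfl⟩ : ∃ m, n = m + 1 := ⟨n - 1, by omega⟩
    have hqinv' : gQ q⁻¹ * gQ q = 1 := by rw [mul_comm]; exact hqinv
    have hs : gQ q⁻¹ = (p : E) * fZ (↑c * (p : ℤ_[p]) ^ m) := by
      rw [hc, cast_mul_pow, fZ_unit_pow_succ]
    obtain ⟨w, hwR, hw⟩ := p_mul_mem_theta hθR hu huinvR huuinv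
      (Subalgebra.algebraMap_mem RE (↑c * (p : ℤ_[p]) ^ m))
    exact (hcrit _ h2).mp ⟨gQ q, h1, hqinv'⟩ ⟨w, hwR, by rw [hs, hw]⟩

section CosetLemmas

variable (p E)

lemma one_mem_OEi (i : ℕ) : MemOEiUnits p E i 1 := by
  refine ⟨⟨1, 0, zero_mem _, by simp⟩, by simpa using one_mem RE,
    by simpa using one_mem RE⟩

variable {p E}

lemma mul_mem_OEi {i : ℕ} {a b : Eˣ} (ha : MemOEiUnits p E i a)
    (hb : MemOEiUnits p E i b) : MemOEiUnits p E i (a * b) := by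
  obtain ⟨⟨c, w, hwR, hw⟩, haR, haR'⟩ := ha
  obtain ⟨⟨d, w', hw'R, hw'⟩, hbR, hbR'⟩ := hb
  refine ⟨⟨c * d, fZ c * w' + fZ d * w + (p : E) ^ i * (w * w'),
    add_mem (add_mem (mul_mem (Subalgebra.algebraMap_mem _ _) hw'R)
      (mul_mem (Subalgebra.algebraMap_mem _ _) hwR))
      (mul_mem (pow_mem p_mem_R i) (mul_mem hwR hw'R)), ?_⟩, ?_, ?_⟩
  · rw [Units.val_mul, hw, hw', map_mul]
    ring
  · rw [Units.val_mul]; exact mul_mem haR hbR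
  · rw [mul_inv_rev, Units.val_mul]; exact mul_mem hbR' haR'

lemma inv_mem_OEi (hθR : θ ∈ RE)
    (hcrit : ∀ z ∈ RE, ((∃ w ∈ RE, z * w = 1) ↔ ¬∃ w ∈ RE, z = θ * w))
    {u₁ u₂ : ℤ_[p]} (hu : θ ^ 2 = (p : E) * (fZ u₁ + fZ u₂ * θ))
    {uinv : E} (huinvR : uinv ∈ RE)
    (huuinv : (fZ u₁ + fZ u₂ * θ) * uinv = 1)
    {i : ℕ} {a : Eˣ} (ha : MemOEiUnits p E i a) : MemOEiUnits p E i a⁻¹ := by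
  have haR := ha.2.1
  have haR' := ha.2.2
  have hrest : ((↑(a⁻¹)⁻¹ : E) ∈ RE) := by rw [inv_inv]; exact haR
  refine ⟨?_, haR', hrest⟩
  rcases Nat.eq_zero_or_pos i with hi | hi
  · subst hi
    exact ⟨0, ↑a⁻¹, haR', by simp⟩
  obtain ⟨c, w, hwR, hw⟩ := ha.1
  by_cases hdvd : (p : ℤ_[p]) ∣ c
  · exfalso
    obtain ⟨c', hc'⟩ := hdvd
    have hsplit : (↑a : E) = (p : E) * (fZ c' + (p : E) ^ (i - 1) * w) := by
      rw [hw, hc', map_mul]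
      have hpow : (p : E) ^ i = (p : E) * (p : E) ^ (i - 1) := by
        conv_lhs => rw [show i = 1 + (i - 1) by omega]
        rw [pow_add, pow_one]
      rw [hpow, fZ_p]
      ring
    obtain ⟨w', hw'R, hw'⟩ := p_mul_mem_theta hθR hu huinvR huuinv
      (add_mem (Subalgebra.algebraMap_mem RE c') (mul_mem (pow_mem p_mem_R _) hwR))
    have hun : ∃ w'' ∈ RE, (↑a : E) * w'' = 1 :=
      ⟨↑a⁻¹, haR', by rw [← Units.val_mul, mul_inv_cancel, Units.val_one]⟩
    exact (hcrit _ haR).mp hun ⟨w', hw'R, by rw [hsplit, hw']⟩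
  · obtain ⟨d, hd⟩ := (isUnit_of_not_dvd hdvd).exists_right_inv
    have haR'' : ((↑a : E))⁻¹ ∈ RE := by
      rw [← Units.val_inv_eq_inv_val]; exact haR'
    refine ⟨d, -(fZ d * w * (↑a : E)⁻¹),
      neg_mem (mul_mem (mul_mem (Subalgebra.algebraMap_mem _ _) hwR) haR''), ?_⟩
    have h1 : (↑a : E) * ((↑a : E))⁻¹ = 1 := mul_inv_cancel₀ (Units.ne_zero a)
    have h2 : fZ c * fZ d = 1 := by rw [← map_mul, hd, map_one]
    have h3 : (↑a : E) * (fZ d + (p : E) ^ i * (-(fZ d * w * (↑a : E)⁻¹))) = 1 := by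
      linear_combination fZ d * hw - ((p : E) ^ i * fZ d * w) * h1 + h2 +
        ((p : E) ^ i * w * ((↑a : E))⁻¹) * ((fZ d) * hw) -
        ((p : E) ^ i * w * ((↑a : E))⁻¹ * fZ d) * hw
    have h4 := eq_inv_of_mul_eq_one_right h3
    rw [Units.val_inv_eq_inv_val]
    exact h4.symm

lemma build_unit {i : ℕ} {vE vE' : E} (hmul : vE * vE' = 1)
    (hm : MemOEi p E i vE) (hm' : MemOEi p E i vE')
    (hR : vE ∈ RE) (hR' : vE' ∈ RE) :
    ∃ v : Eˣ, (↑v : E) = vE ∧ (↑v⁻¹ : E) = vE' ∧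
      MemOEiUnits p E i v ∧ MemOEiUnits p E i v⁻¹ := by
  have h0 : vE ≠ 0 := left_ne_zero_of_mul (hmul ▸ one_ne_zero)
  refine ⟨Units.mk0 vE h0, rfl, ?_, ?_, ?_⟩
  · rw [Units.val_inv_eq_inv_val, Units.val_mk0]
    exact (inv_eq_of_mul_eq_one_right hmul)
  · refine ⟨hm, hR, ?_⟩
    rw [Units.val_inv_eq_inv_val, Units.val_mk0, inv_eq_of_mul_eq_one_right hmul]
    exact hR'
  · constructor
    · rw [Units.val_inv_eq_inv_val, Units.val_mk0, inv_eq_of_mul_eq_one_right hmul]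
      exact hm'
    constructor
    · rw [Units.val_inv_eq_inv_val, Units.val_mk0, inv_eq_of_mul_eq_one_right hmul]
      exact hR'
    · rw [inv_inv, Units.val_mk0]
      exact hR

lemma incoset_trans {i : ℕ} {y y' x : E} {v : Eˣ}
    (hv : MemOEiUnits p E i v⁻¹) (h5 : y * ↑v = y') :
    InCoset p E i y x → InCoset p E i y' x := by
  rintro ⟨t, u₀, hu₀, rfl⟩
  refine ⟨t, v⁻¹ * u₀, mul_mem_OEi hv hu₀, ?_⟩
  have hvv : (↑v : E) * (↑v⁻¹ : E) = 1 := by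
    rw [← Units.val_mul, mul_inv_cancel, Units.val_one]
  rw [Units.val_mul, ← h5]
  linear_combination (-(gQ ↑t * y * (↑u₀ : E))) * hvv

lemma coset_to_eq (hθR : θ ∈ RE)
    (hcrit : ∀ z ∈ RE, ((∃ w ∈ RE, z * w = 1) ↔ ¬∃ w ∈ RE, z = θ * w))
    {u₁ u₂ : ℤ_[p]} (hu : θ ^ 2 = (p : E) * (fZ u₁ + fZ u₂ * θ))
    {uinv : E} (huinvR : uinv ∈ RE)
    (huuinv : (fZ u₁ + fZ u₂ * θ) * uinv = 1)
    {i : ℕ} {y y' x : E}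
    (h : InCoset p E i y x) (h' : InCoset p E i y' x) :
    ∃ (t : ℚ_[p]ˣ) (v : Eˣ), MemOEiUnits p E i v ∧ y' = gQ ↑t * y * ↑v := by
  obtain ⟨t, u₀, hu₀, hx⟩ := h
  obtain ⟨t', u₀', hu₀', hx'⟩ := h'
  refine ⟨t * t'⁻¹, u₀ * u₀'⁻¹,
    mul_mem_OEi hu₀ (inv_mem_OEi hθR hcrit hu huinvR huuinv hu₀'), ?_⟩
  have h1 : (gQ (↑t' : ℚ_[p]) : E) ≠ 0 := (map_ne_zero gQ).mpr (Units.ne_zero t')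
  have h2 : ((↑u₀' : E)) ≠ 0 := Units.ne_zero u₀'
  have heq : gQ ↑t' * y' * ↑u₀' = gQ ↑t * y * ↑u₀ := by rw [← hx', ← hx]
  rw [Units.val_mul, Units.val_mul, Units.val_inv_eq_inv_val,
    Units.val_inv_eq_inv_val, map_mul, map_inv₀]
  field_simp
  linear_combination heq

end CosetLemmas

end ArakawaQuadAux
namespace ArakawaQuadAux

variable {p : ℕ} [hp : Fact p.Prime]
variable {E : Type*} [Field E] [Algebra ℚ_[p] E] [Algebra ℤ_[p] E]
  [IsScalarTower ℤ_[p] ℚ_[p] E] {θ : E}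

local notation "fZ" => algebraMap ℤ_[p] E
local notation "gQ" => algebraMap ℚ_[p] E
local notation "RE" => integralClosure ℤ_[p] E

lemma coset_mp_b (hθR : θ ∈ RE)
    (hbasis : ∀ z ∈ RE, ∃! ab : ℤ_[p] × ℤ_[p], z = fZ ab.1 + fZ ab.2 * θ)
    (hcrit : ∀ z ∈ RE, ((∃ w ∈ RE, z * w = 1) ↔ ¬∃ w ∈ RE, z = θ * w))
    {u₁ u₂ : ℤ_[p]} (hu : θ ^ 2 = (p : E) * (fZ u₁ + fZ u₂ * θ))
    {i : ℕ} {b b' : ℤ_[p]} (hd : (p : ℤ_[p]) ^ i ∣ b' - b)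
    (hd' : (p : ℤ_[p]) ^ i ∣ b - b')
    {x : E} (h : InCoset p E i (1 + fZ b * θ) x) :
    InCoset p E i (1 + fZ b' * θ) x := by
  obtain ⟨w, hwR, hw0⟩ := unit_RE hθR hbasis hcrit hu (β := b) not_p_dvd_one
  obtain ⟨w', hw'R, hw'0⟩ := unit_RE hθR hbasis hcrit hu (β := b') not_p_dvd_one
  rw [map_one] at hw0 hw'0
  obtain ⟨c, hc⟩ := hd
  obtain ⟨c', hc'⟩ := hd'
  have hcE : fZ b' - fZ b = (p : E) ^ i * fZ c := by
    have h2 := congrArg fZ hc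
    rw [map_sub, map_mul, map_pow, map_natCast] at h2
    exact h2
  have hc'E : fZ b - fZ b' = (p : E) ^ i * fZ c' := by
    have h2 := congrArg fZ hc'
    rw [map_sub, map_mul, map_pow, map_natCast] at h2
    exact h2
  have hmul : (w * (1 + fZ b' * θ)) * (w' * (1 + fZ b * θ)) = 1 := by
    linear_combination ((1 + fZ b' * θ) * w') * hw0 + hw'0
  have hm : MemOEi p E i (w * (1 + fZ b' * θ)) := by
    refine ⟨1, fZ c * (θ * w),
      mul_mem (Subalgebra.algebraMap_mem _ _) (mul_mem hθR hwR), ?_⟩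
    rw [map_one]
    linear_combination hw0 + (θ * w) * hcE
  have hm' : MemOEi p E i (w' * (1 + fZ b * θ)) := by
    refine ⟨1, fZ c' * (θ * w'),
      mul_mem (Subalgebra.algebraMap_mem _ _) (mul_mem hθR hw'R), ?_⟩
    rw [map_one]
    linear_combination hw'0 + (θ * w') * hc'E
  have hyR : (1 : E) + fZ b * θ ∈ RE := by
    have h2 := mem_R (θ := θ) hθR 1 b; rwa [map_one] at h2
  have hy'R : (1 : E) + fZ b' * θ ∈ RE := by
    have h2 := mem_R (θ := θ) hθR 1 b'; rwa [map_one] at h2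
  obtain ⟨v, hv, hvinv, hvm, hvm'⟩ :=
    build_unit hmul hm hm' (mul_mem hwR hy'R) (mul_mem hw'R hyR)
  refine incoset_trans hvm' ?_ h
  rw [hv]
  linear_combination (1 + fZ b' * θ) * hw0

lemma y_a_ne_zero (hθR : θ ∈ RE)
    (hbasis : ∀ z ∈ RE, ∃! ab : ℤ_[p] × ℤ_[p], z = fZ ab.1 + fZ ab.2 * θ)
    (a : ℤ_[p]) : fZ a * (p : E) + θ ≠ 0 := by
  intro h0
  have h1 : fZ (a * p) + fZ 1 * θ = fZ 0 + fZ 0 * θ := by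
    simp only [map_mul, map_one, map_zero, map_natCast]
    linear_combination h0
  exact one_ne_zero ((uniq hθR hbasis h1).2)

lemma y_theta_eq {u₁ u₂ : ℤ_[p]}
    (hu : θ ^ 2 = (p : E) * (fZ u₁ + fZ u₂ * θ)) (a : ℤ_[p]) :
    (fZ a * (p : E) + θ) * θ = (p : E) * (fZ u₁ + fZ (u₂ + a) * θ) := by
  simp only [map_add]
  linear_combination hu

lemma coset_mp_a (hθR : θ ∈ RE)
    (hbasis : ∀ z ∈ RE, ∃! ab : ℤ_[p] × ℤ_[p], z = fZ ab.1 + fZ ab.2 * θ)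
    (hcrit : ∀ z ∈ RE, ((∃ w ∈ RE, z * w = 1) ↔ ¬∃ w ∈ RE, z = θ * w))
    {u₁ u₂ : ℤ_[p]} (hu : θ ^ 2 = (p : E) * (fZ u₁ + fZ u₂ * θ))
    (hu₁ : ¬ (p : ℤ_[p]) ∣ u₁)
    {i : ℕ} {a a' : ℤ_[p]} (hd : (p : ℤ_[p]) ^ i ∣ a' - a)
    (hd' : (p : ℤ_[p]) ^ i ∣ a - a')
    {x : E} (h : InCoset p E i (fZ a * (p : E) + θ) x) :
    InCoset p E i (fZ a' * (p : E) + θ) x := by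
  obtain ⟨minv, hminvR, hminv⟩ := unit_RE hθR hbasis hcrit hu (β := u₂ + a) hu₁
  obtain ⟨m'inv, hm'invR, hm'inv⟩ := unit_RE hθR hbasis hcrit hu (β := u₂ + a') hu₁
  obtain ⟨c, hc⟩ := hd
  obtain ⟨c', hc'⟩ := hd'
  have hcE : fZ a' - fZ a = (p : E) ^ i * fZ c := by
    have h2 := congrArg fZ hc
    rw [map_sub, map_mul, map_pow, map_natCast] at h2
    exact h2
  have hc'E : fZ a - fZ a' = (p : E) ^ i * fZ c' := by
    have h2 := congrArg fZ hc'
    rw [map_sub, map_mul, map_pow, map_natCast] at h2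
    exact h2
  have hyθ := y_theta_eq hu a
  have hy'θ := y_theta_eq hu a'
  have h5 : (fZ a * (p : E) + θ) * (1 + (p : E) ^ i * (fZ c * (θ * minv)))
      = fZ a' * (p : E) + θ := by
    linear_combination ((p : E) ^ i * fZ c * minv) * hyθ +
      ((p : E) ^ i * fZ c * (p : E)) * hminv - (p : E) * hcE
  have h5' : (fZ a' * (p : E) + θ) * (1 + (p : E) ^ i * (fZ c' * (θ * m'inv)))
      = fZ a * (p : E) + θ := by
    linear_combination ((p : E) ^ i * fZ c' * m'inv) * hy'θ +
      ((p : E) ^ i * fZ c' * (p : E)) * hm'inv - (p : E) * hc'E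
  have hy0 := y_a_ne_zero hθR hbasis a
  have hmul : (1 + (p : E) ^ i * (fZ c * (θ * minv)))
      * (1 + (p : E) ^ i * (fZ c' * (θ * m'inv))) = 1 := by
    have h6 : (fZ a * (p : E) + θ) * ((1 + (p : E) ^ i * (fZ c * (θ * minv)))
        * (1 + (p : E) ^ i * (fZ c' * (θ * m'inv))))
        = (fZ a * (p : E) + θ) * 1 := by
      rw [mul_one, ← mul_assoc, h5, h5']
    exact mul_left_cancel₀ hy0 h6
  have hm : MemOEi p E i (1 + (p : E) ^ i * (fZ c * (θ * minv))) :=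
    ⟨1, fZ c * (θ * minv),
      mul_mem (Subalgebra.algebraMap_mem _ _) (mul_mem hθR hminvR),
      by rw [map_one]⟩
  have hm' : MemOEi p E i (1 + (p : E) ^ i * (fZ c' * (θ * m'inv))) :=
    ⟨1, fZ c' * (θ * m'inv),
      mul_mem (Subalgebra.algebraMap_mem _ _) (mul_mem hθR hm'invR),
      by rw [map_one]⟩
  have hRv : (1 : E) + (p : E) ^ i * (fZ c * (θ * minv)) ∈ RE :=
    add_mem (one_mem _) (mul_mem (pow_mem p_mem_R i)
      (mul_mem (Subalgebra.algebraMap_mem _ _) (mul_mem hθR hminvR)))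
  have hRv' : (1 : E) + (p : E) ^ i * (fZ c' * (θ * m'inv)) ∈ RE :=
    add_mem (one_mem _) (mul_mem (pow_mem p_mem_R i)
      (mul_mem (Subalgebra.algebraMap_mem _ _) (mul_mem hθR hm'invR)))
  obtain ⟨v, hv, hvinv, hvm, hvm'⟩ := build_unit hmul hm hm' hRv hRv'
  refine incoset_trans hvm' ?_ h
  rw [hv]
  exact h5

lemma b_unique (hθR : θ ∈ RE)
    (hbasis : ∀ z ∈ RE, ∃! ab : ℤ_[p] × ℤ_[p], z = fZ ab.1 + fZ ab.2 * θ)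
    (hcrit : ∀ z ∈ RE, ((∃ w ∈ RE, z * w = 1) ↔ ¬∃ w ∈ RE, z = θ * w))
    {u₁ u₂ : ℤ_[p]} (hu : θ ^ 2 = (p : E) * (fZ u₁ + fZ u₂ * θ))
    {uinv : E} (huinvR : uinv ∈ RE)
    (huuinv : (fZ u₁ + fZ u₂ * θ) * uinv = 1)
    {i : ℕ} {b b' : ℤ_[p]} {x : E}
    (h : InCoset p E i (1 + fZ b * θ) x)
    (h' : InCoset p E i (1 + fZ b' * θ) x) :
    (p : ℤ_[p]) ^ i ∣ b - b' := by
  obtain ⟨t, v, hv, heq⟩ := coset_to_eq hθR hcrit hu huinvR huuinv h h'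
  obtain ⟨w, hwR, hw0⟩ := unit_RE hθR hbasis hcrit hu (β := b) not_p_dvd_one
  obtain ⟨w', hw'R, hw'0⟩ := unit_RE hθR hbasis hcrit hu (β := b') not_p_dvd_one
  rw [map_one] at hw0 hw'0
  have hvv : (↑v : E) * (↑v⁻¹ : E) = 1 := by
    rw [← Units.val_mul, mul_inv_cancel, Units.val_one]
  have ht0 : ((↑t : ℚ_[p])) ≠ 0 := Units.ne_zero t
  have hy'R : (1 : E) + fZ b' * θ ∈ RE := by
    have h2 := mem_R (θ := θ) hθR 1 b'; rwa [map_one] at h2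
  have hyR : (1 : E) + fZ b * θ ∈ RE := by
    have h2 := mem_R (θ := θ) hθR 1 b; rwa [map_one] at h2
  have hs_eq : gQ (↑t : ℚ_[p]) = (1 + fZ b' * θ) * (w * (↑v⁻¹ : E)) := by
    linear_combination (-(w * (↑v⁻¹ : E))) * heq
      - (gQ (↑t : ℚ_[p]) * (↑v : E) * (↑v⁻¹ : E)) * hw0
      - (gQ (↑t : ℚ_[p])) * hvv
  have hsR : gQ (↑t : ℚ_[p]) ∈ RE := by
    rw [hs_eq]; exact mul_mem hy'R (mul_mem hwR hv.2.2)
  have hs'_eq : gQ ((↑t : ℚ_[p])⁻¹) = (1 + fZ b * θ) * ((↑v : E) * w') := by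
    rw [map_inv₀]
    refine inv_eq_of_mul_eq_one_right ?_
    linear_combination (-(w')) * heq + hw'0
  have hs'R : gQ ((↑t : ℚ_[p])⁻¹) ∈ RE := by
    rw [hs'_eq]; exact mul_mem hyR (mul_mem hv.2.1 hw'R)
  obtain ⟨cu, hcu_unit, hcu⟩ := scalar_int hθR hcrit hu huinvR huuinv ht0 hsR hs'R
  obtain ⟨d, wE, hwER, hwE⟩ := hv.1
  obtain ⟨⟨w₁, w₂⟩, hw12, -⟩ := hbasis wE hwER
  have hvco : (↑v : E) = fZ (d + (p : ℤ_[p]) ^ i * w₁)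
      + fZ ((p : ℤ_[p]) ^ i * w₂) * θ := by
    rw [hwE, hw12]
    simp only [map_add, map_mul, map_pow, map_natCast]
    ring
  have hstep : (1 : E) + fZ b' * θ = (fZ cu + fZ (cu * b) * θ)
      * (fZ (d + (p : ℤ_[p]) ^ i * w₁) + fZ ((p : ℤ_[p]) ^ i * w₂) * θ) := by
    rw [heq, hcu, hvco]
    simp only [map_mul]
    ring
  rw [prod_eq hu] at hstep
  have hstep' : fZ (1 : ℤ_[p]) + fZ b' * θ
      = fZ (cu * (d + (p : ℤ_[p]) ^ i * w₁)
          + p * (cu * b) * ((p : ℤ_[p]) ^ i * w₂) * u₁)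
      + fZ (cu * ((p : ℤ_[p]) ^ i * w₂) + cu * b * (d + (p : ℤ_[p]) ^ i * w₁)
          + p * (cu * b) * ((p : ℤ_[p]) ^ i * w₂) * u₂) * θ := by
    rw [map_one]
    exact hstep
  obtain ⟨E1, E2⟩ := uniq hθR hbasis hstep'
  refine ⟨cu * w₂ * (p * b ^ 2 * u₁ - 1 - p * b * u₂), ?_⟩
  linear_combination b * E1 - E2

lemma a_unique (hθR : θ ∈ RE)
    (hbasis : ∀ z ∈ RE, ∃! ab : ℤ_[p] × ℤ_[p], z = fZ ab.1 + fZ ab.2 * θ)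
    (hcrit : ∀ z ∈ RE, ((∃ w ∈ RE, z * w = 1) ↔ ¬∃ w ∈ RE, z = θ * w))
    {u₁ u₂ : ℤ_[p]} (hu : θ ^ 2 = (p : E) * (fZ u₁ + fZ u₂ * θ))
    (hu₁ : ¬ (p : ℤ_[p]) ∣ u₁)
    {uinv : E} (huinvR : uinv ∈ RE)
    (huuinv : (fZ u₁ + fZ u₂ * θ) * uinv = 1)
    {i : ℕ} {a a' : ℤ_[p]} {x : E}
    (h : InCoset p E i (fZ a * (p : E) + θ) x)
    (h' : InCoset p E i (fZ a' * (p : E) + θ) x) :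
    (p : ℤ_[p]) ^ i ∣ a - a' := by
  obtain ⟨t, v, hv, heq⟩ := coset_to_eq hθR hcrit hu huinvR huuinv h h'
  obtain ⟨minv, hminvR, hminv⟩ := unit_RE hθR hbasis hcrit hu (β := u₂ + a) hu₁
  obtain ⟨m'inv, hm'invR, hm'inv⟩ := unit_RE hθR hbasis hcrit hu (β := u₂ + a') hu₁
  have hvv : (↑v : E) * (↑v⁻¹ : E) = 1 := by
    rw [← Units.val_mul, mul_inv_cancel, Units.val_one]
  have ht0 : ((↑t : ℚ_[p])) ≠ 0 := Units.ne_zero t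
  have hyθ := y_theta_eq hu a
  have hy'θ := y_theta_eq hu a'
  have h7 : (p : E) * (fZ u₁ + fZ (u₂ + a') * θ)
      = (p : E) * (gQ (↑t : ℚ_[p]) * (fZ u₁ + fZ (u₂ + a) * θ) * (↑v : E)) := by
    linear_combination θ * heq - hy'θ + (gQ (↑t : ℚ_[p]) * (↑v : E)) * hyθ
  have hm'_eq : fZ u₁ + fZ (u₂ + a') * θ
      = gQ (↑t : ℚ_[p]) * (fZ u₁ + fZ (u₂ + a) * θ) * (↑v : E) :=
    mul_left_cancel₀ p_ne_zero_E h7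
  have hs_eq : gQ (↑t : ℚ_[p]) = (fZ u₁ + fZ (u₂ + a') * θ) * (minv * (↑v⁻¹ : E)) := by
    linear_combination (-(minv * (↑v⁻¹ : E))) * hm'_eq
      - (gQ (↑t : ℚ_[p]) * (↑v : E) * (↑v⁻¹ : E)) * hminv
      - (gQ (↑t : ℚ_[p])) * hvv
  have hsR : gQ (↑t : ℚ_[p]) ∈ RE := by
    rw [hs_eq]; exact mul_mem (mem_R hθR u₁ (u₂ + a')) (mul_mem hminvR hv.2.2)
  have hs'_eq : gQ ((↑t : ℚ_[p])⁻¹)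
      = (fZ u₁ + fZ (u₂ + a) * θ) * ((↑v : E) * m'inv) := by
    rw [map_inv₀]
    refine inv_eq_of_mul_eq_one_right ?_
    linear_combination (-(m'inv)) * hm'_eq + hm'inv
  have hs'R : gQ ((↑t : ℚ_[p])⁻¹) ∈ RE := by
    rw [hs'_eq]; exact mul_mem (mem_R hθR u₁ (u₂ + a)) (mul_mem hv.2.1 hm'invR)
  obtain ⟨cu, hcu_unit, hcu⟩ := scalar_int hθR hcrit hu huinvR huuinv ht0 hsR hs'R
  obtain ⟨d, wE, hwER, hwE⟩ := hv.1
  obtain ⟨⟨w₁, w₂⟩, hw12, -⟩ := hbasis wE hwER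
  have hvco : (↑v : E) = fZ (d + (p : ℤ_[p]) ^ i * w₁)
      + fZ ((p : ℤ_[p]) ^ i * w₂) * θ := by
    rw [hwE, hw12]
    simp only [map_add, map_mul, map_pow, map_natCast]
    ring
  have hstep : fZ u₁ + fZ (u₂ + a') * θ = (fZ (cu * u₁) + fZ (cu * (u₂ + a)) * θ)
      * (fZ (d + (p : ℤ_[p]) ^ i * w₁) + fZ ((p : ℤ_[p]) ^ i * w₂) * θ) := by
    rw [hm'_eq, hcu, hvco]
    simp only [map_mul, map_add]
    ring
  rw [prod_eq hu] at hstep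
  obtain ⟨E1, E2⟩ := uniq hθR hbasis hstep
  have hu₁0 : u₁ ≠ 0 := fun h0 => hu₁ (h0 ▸ dvd_zero _)
  have E1' : (1 : ℤ_[p]) = cu * (d + (p : ℤ_[p]) ^ i * w₁)
      + p * (cu * (u₂ + a)) * ((p : ℤ_[p]) ^ i * w₂) := by
    apply mul_left_cancel₀ hu₁0
    linear_combination E1
  refine ⟨cu * w₂ * (p * (u₂ + a) ^ 2 - u₁ - p * (u₂ + a) * u₂), ?_⟩
  linear_combination (u₂ + a) * E1' - E2

lemma cross_exclude (hθR : θ ∈ RE)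
    (hbasis : ∀ z ∈ RE, ∃! ab : ℤ_[p] × ℤ_[p], z = fZ ab.1 + fZ ab.2 * θ)
    (hcrit : ∀ z ∈ RE, ((∃ w ∈ RE, z * w = 1) ↔ ¬∃ w ∈ RE, z = θ * w))
    {u₁ u₂ : ℤ_[p]} (hu : θ ^ 2 = (p : E) * (fZ u₁ + fZ u₂ * θ))
    (hu₁ : ¬ (p : ℤ_[p]) ∣ u₁)
    {uinv : E} (huinvR : uinv ∈ RE)
    (huuinv : (fZ u₁ + fZ u₂ * θ) * uinv = 1)
    {i : ℕ} {b a : ℤ_[p]} {x : E}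
    (h : InCoset p E i (1 + fZ b * θ) x)
    (h' : InCoset p E i (fZ a * (p : E) + θ) x) :
    False := by
  obtain ⟨t, v, hv, heq⟩ := coset_to_eq hθR hcrit hu huinvR huuinv h h'
  obtain ⟨w, hwR, hw0⟩ := unit_RE hθR hbasis hcrit hu (β := b) not_p_dvd_one
  rw [map_one] at hw0
  obtain ⟨minv, hminvR, hminv⟩ := unit_RE hθR hbasis hcrit hu (β := u₂ + a) hu₁
  have hvv : (↑v : E) * (↑v⁻¹ : E) = 1 := by
    rw [← Units.val_mul, mul_inv_cancel, Units.val_one]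
  have hyθ := y_theta_eq hu a
  have hyR : (1 : E) + fZ b * θ ∈ RE := by
    have h2 := mem_R (θ := θ) hθR 1 b; rwa [map_one] at h2
  have hMR : (fZ u₁ + fZ (u₂ + a) * θ) * ((↑v⁻¹ : E) * w) ∈ RE :=
    mul_mem (mem_R hθR u₁ (u₂ + a)) (mul_mem hv.2.2 hwR)
  have hMinv : ((fZ u₁ + fZ (u₂ + a) * θ) * ((↑v⁻¹ : E) * w))
      * ((1 + fZ b * θ) * (↑v : E) * minv) = 1 := by
    linear_combination ((↑v⁻¹ : E) * w * (1 + fZ b * θ) * (↑v : E)) * hminv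
      + ((↑v⁻¹ : E) * (↑v : E)) * hw0 + hvv
  have hMnθ := (hcrit _ hMR).mp
    ⟨(1 + fZ b * θ) * (↑v : E) * minv,
      mul_mem (mul_mem hyR hv.2.1) hminvR, hMinv⟩
  have hθs : gQ (↑t : ℚ_[p]) * θ
      = (p : E) * ((fZ u₁ + fZ (u₂ + a) * θ) * ((↑v⁻¹ : E) * w)) := by
    linear_combination (-(θ * (↑v⁻¹ : E) * w)) * heq + ((↑v⁻¹ : E) * w) * hyθ
      - (gQ (↑t : ℚ_[p]) * θ * (↑v : E) * (↑v⁻¹ : E)) * hw0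
      - (gQ (↑t : ℚ_[p]) * θ) * hvv
  have ht0 : ((↑t : ℚ_[p])) ≠ 0 := Units.ne_zero t
  have final : ∀ z : ℤ_[p], gQ (↑t : ℚ_[p]) * fZ z = 1 → False := by
    intro z hss'
    have e1 : θ = fZ z * ((p : E)
        * ((fZ u₁ + fZ (u₂ + a) * θ) * ((↑v⁻¹ : E) * w))) := by
      linear_combination fZ z * hθs - θ * hss'
    have e2 : (p : E) * (fZ u₁ + fZ u₂ * θ) = (p : E) * ((p : E)
        * (((fZ u₁ + fZ (u₂ + a) * θ) * ((↑v⁻¹ : E) * w))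
          * ((fZ u₁ + fZ (u₂ + a) * θ) * ((↑v⁻¹ : E) * w)) * (fZ z * fZ z))) := by
      linear_combination (-1 : E) * hu
        + (θ + fZ z * ((p : E) * ((fZ u₁ + fZ (u₂ + a) * θ) * ((↑v⁻¹ : E) * w)))) * e1
    have e3 := mul_left_cancel₀ p_ne_zero_E e2
    obtain ⟨w', hw'R, hw'⟩ := p_mul_mem_theta hθR hu huinvR huuinv
      (mul_mem (mul_mem hMR hMR)
        (mul_mem (Subalgebra.algebraMap_mem _ z) (Subalgebra.algebraMap_mem _ z)))
    exact (hcrit _ (mem_R hθR u₁ u₂)).mp ⟨uinv, huinvR, huuinv⟩ ⟨w', hw'R, by rw [e3, hw']⟩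
  rcases padic_rep' ht0 with ⟨c, hc⟩ | ⟨c, n, hn, hc⟩ | ⟨c, n, hn, hc⟩
  · refine final ↑(c⁻¹) ?_
    rw [hc, ← fZ_eq, ← map_mul, ← Units.val_mul, mul_inv_cancel, Units.val_one, map_one]
  · obtain ⟨m0, rfl⟩ : ∃ m0, n = m0 + 1 := ⟨n - 1, by omega⟩
    have hs2 : gQ (↑t : ℚ_[p]) = (p : E) * fZ (↑c * (p : ℤ_[p]) ^ m0) := by
      rw [hc, cast_mul_pow, fZ_unit_pow_succ]
    have hM2 : (p : E) * ((fZ u₁ + fZ (u₂ + a) * θ) * ((↑v⁻¹ : E) * w))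
        = (p : E) * (θ * fZ (↑c * (p : ℤ_[p]) ^ m0)) := by
      linear_combination (-1 : E) * hθs + θ * hs2
    have hM3 := mul_left_cancel₀ p_ne_zero_E hM2
    exact hMnθ ⟨fZ (↑c * (p : ℤ_[p]) ^ m0), Subalgebra.algebraMap_mem _ _, hM3⟩
  · refine final (↑c * (p : ℤ_[p]) ^ n) ?_
    rw [← cast_mul_pow, ← hc, ← map_mul, mul_inv_cancel₀ ht0, map_one]

lemma exists_rep (hθR : θ ∈ RE)
    (hbasis : ∀ z ∈ RE, ∃! ab : ℤ_[p] × ℤ_[p], z = fZ ab.1 + fZ ab.2 * θ)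
    {u₁ u₂ : ℤ_[p]} (hu : θ ^ 2 = (p : E) * (fZ u₁ + fZ u₂ * θ))
    (hrank : Module.finrank ℚ_[p] E = 2)
    {x : E} (hx : x ≠ 0) :
    (∃ (b : ℤ_[p]) (t : ℚ_[p]ˣ), x = gQ (↑t : ℚ_[p]) * (1 + fZ b * θ)) ∨
    (∃ (a : ℤ_[p]) (t : ℚ_[p]ˣ), x = gQ (↑t : ℚ_[p]) * (fZ a * (p : E) + θ)) := by
  have hθ0 : θ ≠ 0 := by
    intro h0
    have h1 : fZ (0 : ℤ_[p]) + fZ (1 : ℤ_[p]) * θ = fZ (0 : ℤ_[p]) + fZ (0 : ℤ_[p]) * θ := by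
      simp [h0]
    exact one_ne_zero ((uniq hθR hbasis h1).2)
  have hli : LinearIndependent ℚ_[p] ![(1 : E), θ] := by
    rw [LinearIndependent.pair_iff' one_ne_zero]
    intro r hr
    have hrθ : gQ r = θ := by rw [← hr, Algebra.smul_def, mul_one]
    have hr0 : r ≠ 0 := by
      rintro rfl; rw [map_zero] at hrθ; exact hθ0 hrθ.symm
    have hcase : ∀ z : ℤ_[p], θ ≠ fZ z := by
      intro z h0
      have h1 : fZ z + fZ (0 : ℤ_[p]) * θ = fZ (0 : ℤ_[p]) + fZ (1 : ℤ_[p]) * θ := by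
        simp [← h0]
      exact one_ne_zero ((uniq hθR hbasis h1).2.symm)
    rcases padic_rep' hr0 with ⟨c, hc⟩ | ⟨c, n, hn, hc⟩ | ⟨c, n, hn, hc⟩
    · exact hcase ↑c (by rw [← hrθ, hc, ← fZ_eq])
    · exact hcase (↑c * (p : ℤ_[p]) ^ n) (by rw [← hrθ, hc, cast_mul_pow])
    · have h1 : θ * fZ ((↑c : ℤ_[p]) * (p : ℤ_[p]) ^ n) = 1 := by
        rw [← hrθ, ← cast_mul_pow, ← hc, ← map_mul, mul_inv_cancel₀ hr0, map_one]
      obtain ⟨z, hz⟩ : ∃ z : ℤ_[p], z = (↑c : ℤ_[p]) * (p : ℤ_[p]) ^ n := ⟨_, rfl⟩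
      rw [← hz] at h1
      have h2 : fZ (1 : ℤ_[p]) + fZ (0 : ℤ_[p]) * θ
          = fZ (p * (u₁ * (z * z))) + fZ (p * (u₂ * (z * z))) * θ := by
        simp only [map_mul, map_add, map_zero, map_one, map_natCast]
        linear_combination (-(1 + θ * fZ z)) * h1 + (fZ z * fZ z) * hu
      have h3 := (uniq hθR hbasis h2).1
      exact not_p_dvd_one ⟨u₁ * (z * z), h3⟩
  haveI : FiniteDimensional ℚ_[p] E := FiniteDimensional.of_finrank_eq_succ hrank
  let B := basisOfLinearIndependentOfCardEqFinrank hli (by simp [hrank])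
  have hcoe : ⇑B = ![(1 : E), θ] :=
    coe_basisOfLinearIndependentOfCardEqFinrank _ _
  have hBrepr := B.sum_repr x
  rw [Fin.sum_univ_two] at hBrepr
  have hB0 : B 0 = 1 := by rw [hcoe]; rfl
  have hB1 : B 1 = θ := by rw [hcoe]; rfl
  have hxrep : x = gQ (B.repr x 0) + gQ (B.repr x 1) * θ := by
    conv_lhs => rw [← hBrepr]
    rw [hB0, hB1, Algebra.smul_def, Algebra.smul_def, mul_one]
  set r₀ := B.repr x 0 with hr₀def
  set r₁ := B.repr x 1 with hr₁def
  by_cases h1 : r₁ = 0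
  · have hr₀ : r₀ ≠ 0 := by
      intro h0
      apply hx
      rw [hxrep, h0, h1]
      simp
    left
    refine ⟨0, Units.mk0 r₀ hr₀, ?_⟩
    rw [hxrep, h1, Units.val_mk0]
    simp
  by_cases h0 : r₀ = 0
  · right
    refine ⟨0, Units.mk0 r₁ h1, ?_⟩
    rw [hxrep, h0, Units.val_mk0]
    simp
  obtain ⟨c₀, j, hj⟩ := padic_rep h0
  obtain ⟨c₁, k, hk⟩ := padic_rep h1
  have hcc₀ : ((↑c₀ : ℤ_[p]) : ℚ_[p]) * ((↑(c₀⁻¹) : ℤ_[p]) : ℚ_[p]) = 1 := by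
    rw [← PadicInt.coe_mul, ← Units.val_mul, mul_inv_cancel, Units.val_one,
      PadicInt.coe_one]
  have hcc₁ : ((↑c₁ : ℤ_[p]) : ℚ_[p]) * ((↑(c₁⁻¹) : ℤ_[p]) : ℚ_[p]) = 1 := by
    rw [← PadicInt.coe_mul, ← Units.val_mul, mul_inv_cancel, Units.val_one,
      PadicInt.coe_one]
  rcases le_or_gt j k with hjk | hjk
  · left
    refine ⟨↑c₁ * ↑(c₀⁻¹) * (p : ℤ_[p]) ^ ((k - j).toNat), Units.mk0 r₀ h0, ?_⟩
    rw [Units.val_mk0]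
    have key : gQ r₀ * fZ (↑c₁ * ↑(c₀⁻¹) * (p : ℤ_[p]) ^ ((k - j).toNat)) = gQ r₁ := by
      rw [fZ_eq, ← map_mul]
      congr 1
      rw [hj, hk]
      push_cast
      have hpw : (p : ℚ_[p]) ^ j * (p : ℚ_[p]) ^ (((k - j).toNat : ℕ)) = (p : ℚ_[p]) ^ k := by
        rw [← zpow_natCast (p : ℚ_[p]) ((k - j).toNat), ← zpow_add₀ p_ne_zero_Q,
          Int.toNat_of_nonneg (by omega)]
        congr 1
        omega
      linear_combination (((↑c₀ : ℤ_[p]) : ℚ_[p]) * ((↑(c₀⁻¹) : ℤ_[p]) : ℚ_[p])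
          * ((↑c₁ : ℤ_[p]) : ℚ_[p])) * hpw
        + (((↑c₁ : ℤ_[p]) : ℚ_[p]) * (p : ℚ_[p]) ^ k) * hcc₀
    rw [hxrep]
    linear_combination (-θ) * key
  · right
    refine ⟨↑c₀ * ↑(c₁⁻¹) * (p : ℤ_[p]) ^ ((j - k - 1).toNat), Units.mk0 r₁ h1, ?_⟩
    rw [Units.val_mk0]
    have key : gQ r₁ * fZ (↑c₀ * ↑(c₁⁻¹) * (p : ℤ_[p]) ^ ((j - k - 1).toNat)) * (p : E)
        = gQ r₀ := by
      rw [fZ_eq, ← gQ_p, ← map_mul, ← map_mul]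
      congr 1
      rw [hj, hk]
      push_cast
      have hpw : (p : ℚ_[p]) ^ k * (p : ℚ_[p]) ^ (((j - k - 1).toNat : ℕ)) * (p : ℚ_[p])
          = (p : ℚ_[p]) ^ j := by
        rw [← zpow_natCast (p : ℚ_[p]) ((j - k - 1).toNat),
          Int.toNat_of_nonneg (by omega), ← zpow_add₀ p_ne_zero_Q,
          ← zpow_add_one₀ p_ne_zero_Q]
        congr 1
        omega
      linear_combination (((↑c₁ : ℤ_[p]) : ℚ_[p]) * ((↑(c₁⁻¹) : ℤ_[p]) : ℚ_[p])
          * ((↑c₀ : ℤ_[p]) : ℚ_[p])) * hpw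
        + (((↑c₀ : ℤ_[p]) : ℚ_[p]) * (p : ℚ_[p]) ^ j) * hcc₁
    rw [hxrep]
    linear_combination (-1 : E) * key

end ArakawaQuadAux

open ArakawaQuadAux
/-- **Double coset decomposition `ℚ_p^× \ E^× / 𝒪_{E,i}^×`** (Section 3.2(3),
ramified prime case). Let `E/ℚ_p` be a ramified quadratic extension with maximal
ideal `𝔭 = θ𝒪_E`, `𝔭² = p𝒪_E`, and `{1, θ}` a `ℤ_p`-basis of `𝒪_E`. For `i ≥ 0`,
every `x ∈ E^×` lies in the double coset `ℚ_p^× y 𝒪_{E,i}^×` for exactly one `y` of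
the list: `y = 1+bθ` with `b` over representatives of `ℤ_p/p^i ℤ_p`, or `y = ap+θ`
with `a` over representatives of `ℤ_p/p^i ℤ_p` (the double coset of `y` depending
only on the class of `b`, respectively `a`). -/
theorem double_coset_ramified (p : ℕ) [Fact p.Prime]
    (E : Type*) [Field E] [Algebra ℚ_[p] E] [Algebra ℤ_[p] E]
    [IsScalarTower ℤ_[p] ℚ_[p] E]
    (θ : E) (hE : Ramified p E θ) (hθ : IsIntBasis p E θ) (i : ℕ) :
    (∀ b b' : ℤ_[p], (p : ℤ_[p]) ^ i ∣ (b - b') →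
      ∀ x : E, InCoset p E i (1 + algebraMap ℤ_[p] E b * θ) x ↔
        InCoset p E i (1 + algebraMap ℤ_[p] E b' * θ) x) ∧
    (∀ a a' : ℤ_[p], (p : ℤ_[p]) ^ i ∣ (a - a') →
      ∀ x : E, InCoset p E i (algebraMap ℤ_[p] E a * (p : E) + θ) x ↔
        InCoset p E i (algebraMap ℤ_[p] E a' * (p : E) + θ) x) ∧
    (∀ x : E, x ≠ 0 →
      ((∃ b : ℤ_[p], InCoset p E i (1 + algebraMap ℤ_[p] E b * θ) x) ∨
        (∃ a : ℤ_[p], InCoset p E i (algebraMap ℤ_[p] E a * (p : E) + θ) x)) ∧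
      (∀ b b' : ℤ_[p], InCoset p E i (1 + algebraMap ℤ_[p] E b * θ) x →
        InCoset p E i (1 + algebraMap ℤ_[p] E b' * θ) x → (p : ℤ_[p]) ^ i ∣ (b - b')) ∧
      (∀ a a' : ℤ_[p], InCoset p E i (algebraMap ℤ_[p] E a * (p : E) + θ) x →
        InCoset p E i (algebraMap ℤ_[p] E a' * (p : E) + θ) x →
        (p : ℤ_[p]) ^ i ∣ (a - a')) ∧
      (∀ b a : ℤ_[p], InCoset p E i (1 + algebraMap ℤ_[p] E b * θ) x →
        ¬ InCoset p E i (algebraMap ℤ_[p] E a * (p : E) + θ) x)) := by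
  obtain ⟨hrank, hθR, hcrit, u_elt, huR, ⟨uinv, huinvR, huuinv⟩, husq⟩ := hE
  obtain ⟨-, hbasis⟩ := hθ
  obtain ⟨⟨u₁, u₂⟩, hu12, -⟩ := hbasis u_elt huR
  rw [hu12] at husq huuinv
  have hu : θ ^ 2 = (p : E) * (algebraMap ℤ_[p] E u₁ + algebraMap ℤ_[p] E u₂ * θ) := husq
  have hu₁ : ¬ (p : ℤ_[p]) ∣ u₁ := by
    intro hdvd
    obtain ⟨w', hw'R, hw'⟩ := dvd_theta hθR hu huinvR huuinv (β := u₂) hdvd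
    exact (hcrit _ (mem_R hθR u₁ u₂)).mp ⟨uinv, huinvR, huuinv⟩ ⟨w', hw'R, hw'⟩
  refine ⟨?_, ?_, ?_⟩
  · intro b b' hd x
    have hd2 : (p : ℤ_[p]) ^ i ∣ b' - b := by
      rw [← neg_sub b b']
      exact dvd_neg.mpr hd
    exact ⟨coset_mp_b hθR hbasis hcrit hu hd2 hd,
      coset_mp_b hθR hbasis hcrit hu hd hd2⟩
  · intro a a' hd x
    have hd2 : (p : ℤ_[p]) ^ i ∣ a' - a := by
      rw [← neg_sub a a']
      exact dvd_neg.mpr hd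
    exact ⟨coset_mp_a hθR hbasis hcrit hu hu₁ hd2 hd,
      coset_mp_a hθR hbasis hcrit hu hu₁ hd hd2⟩
  · intro x hx
    refine ⟨?_, ?_, ?_, ?_⟩
    · rcases exists_rep hθR hbasis hu hrank hx with ⟨b, t, hbt⟩ | ⟨a, t, hat⟩
      · exact Or.inl ⟨b, t, 1, one_mem_OEi p E i,
          by rw [hbt, Units.val_one, mul_one]⟩
      · exact Or.inr ⟨a, t, 1, one_mem_OEi p E i,
          by rw [hat, Units.val_one, mul_one]⟩
    · intro b b' h h'
      exact b_unique hθR hbasis hcrit hu huinvR huuinv h h'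
    · intro a a' h h'
      exact a_unique hθR hbasis hcrit hu hu₁ huinvR huuinv h h'
    · intro b a h h'
      exact cross_exclude hθR hbasis hcrit hu hu₁ huinvR huuinv h h'
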